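/- Let R(d) be the set of nonsingular d×d 0/1-matrices. Then |R(d)| = |G(d)| · d! · (2^d − E(d))/d for all d ≥ 2. -/

import Mathlib

open scoped Classical
open Filter Matrix

noncomputable section

/-- A 0/1-matrix (with `Bool` entries) viewed as a real matrix. -/
def bmToR {m n : Type*} (M : Matrix m n Bool) : Matrix m n ℝ :=
  fun i j => if M i j then 1 else 0

/-- A 0/1-vector (with `Bool` entries) viewed as a vector in `ℝ^d`. -/
def bvToR {d : ℕ} (v : Fin d → Bool) : Fin d → ℝ := fun i => if v i then 1 else 0

/-- `Gset d` is the set of all linearly independent `(d-1)`-element sets of 0/1-vectors in `ℝ^d`. -/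
def Gset (d : ℕ) : Finset (Finset (Fin d → Bool)) :=
  Finset.univ.filter (fun G => G.card = d - 1 ∧
    LinearIndependent ℝ (fun v : {x // x ∈ G} => bvToR v.1))

/-- `vnum S` is the number of 0/1-vectors in the linear span of the set `S` of 0/1-vectors. -/
def vnum {d : ℕ} (S : Finset (Fin d → Bool)) : ℕ :=
  (Finset.univ.filter (fun x : Fin d → Bool =>
    bvToR x ∈ Submodule.span ℝ (bvToR '' (S : Set (Fin d → Bool))))).card

/-- `Ed d` is the expected number of 0/1-points on the hyperplane spanned by a uniformly
random linearly independent set of `d - 1` 0/1-vectors. -/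
def Ed (d : ℕ) : ℝ := (∑ G ∈ Gset d, (vnum G : ℝ)) / (Gset d).card

lemma bvToR_injective {d : ℕ} : Function.Injective (bvToR (d := d)) := by
  intro a b h
  funext i
  have := congrFun h i
  simp only [bvToR] at this
  cases ha : a i <;> cases hb : b i <;> simp [ha, hb] at this ⊢

/-- The number of functions `Fin n → α` with image a given `n`-element finset `G` is `n!`. -/
lemma fiber_card {α : Type*} [Fintype α] [DecidableEq α] {n : ℕ} {G : Finset α}
    (hG : G.card = n) :
    (Finset.univ.filter (fun g : Fin n → α => Finset.image g Finset.univ = G)).card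
      = n.factorial := by
  have hcard : Fintype.card {x // x ∈ G} = n := by simp [hG]
  rw [← Fintype.card_subtype]
  have him : ∀ e : Fin n ≃ {x // x ∈ G}, Finset.image (fun i => (e i).1) Finset.univ = G := by
    intro e
    ext x
    simp only [Finset.mem_image, Finset.mem_univ, true_and]
    constructor
    · rintro ⟨i, rfl⟩; exact (e i).2
    · intro hx; exact ⟨e.symm ⟨x, hx⟩, by simp⟩
  set F : (Fin n ≃ {x // x ∈ G}) → {g : Fin n → α // Finset.image g Finset.univ = G} :=
    fun e => ⟨fun i => (e i).1, him e⟩ with hF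
  have hFbij : Function.Bijective F := by
    constructor
    · intro e1 e2 h
      ext i
      exact congrFun (congrArg Subtype.val h) i
    · rintro ⟨g, hg⟩
      have hinj : Function.Injective g := by
        have h1 : (Finset.univ.image g).card = (Finset.univ : Finset (Fin n)).card := by
          rw [hg, hG]; simp
        have h2 := Finset.card_image_iff.mp h1
        intro a b hab
        exact h2 (by simp) (by simp) hab
      set e0 : Fin n → {x // x ∈ G} := fun i => ⟨g i, by
        rw [← hg]; exact Finset.mem_image_of_mem g (Finset.mem_univ i)⟩ with he0
      have he0inj : Function.Injective e0 := by
        intro a b hab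
        exact hinj (congrArg Subtype.val hab)
      have he0bij : Function.Bijective e0 :=
        (Fintype.bijective_iff_injective_and_card e0).mpr ⟨he0inj, by simp [hcard]⟩
      refine ⟨Equiv.ofBijective e0 he0bij, ?_⟩
      apply Subtype.ext
      funext i
      rfl
  rw [← Fintype.card_of_bijective hFbij, Fintype.card_equiv (Fintype.equivOfCardEq (by simp [hcard]))]
  simp

/-- Linear independence of an injective family vs. of its image set. -/
lemma li_comp_iff {n d : ℕ} {g : Fin n → (Fin d → Bool)} (hinj : Function.Injective g) :
    LinearIndependent ℝ (bvToR ∘ g) ↔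
      LinearIndependent ℝ
        (fun v : {x // x ∈ Finset.image g Finset.univ} => bvToR v.1) := by
  set G := Finset.image g Finset.univ with hG
  set e0 : Fin n → {x // x ∈ G} :=
    fun i => ⟨g i, Finset.mem_image_of_mem g (Finset.mem_univ i)⟩ with he0
  have he0bij : Function.Bijective e0 := by
    constructor
    · intro a b hab; exact hinj (congrArg Subtype.val hab)
    · rintro ⟨x, hx⟩
      simp only [hG, Finset.mem_image, Finset.mem_univ, true_and] at hx
      obtain ⟨i, rfl⟩ := hx
      exact ⟨i, rfl⟩
  rw [← linearIndependent_equiv (Equiv.ofBijective e0 he0bij)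
    (f := fun v : {x // x ∈ G} => bvToR v.1)]
  rfl

/-- Counting linearly independent `(n+1)`-tuples of 0/1-vectors, grouped by the span
of the first `n` of them. -/
lemma count_li (n : ℕ) :
    (Finset.univ.filter (fun M : Fin (n+1) → Fin (n+1) → Bool =>
        LinearIndependent ℝ (fun i => bvToR (M i)))).card
      = ∑ G ∈ Gset (n+1), n.factorial * (2 ^ (n+1) - vnum G) := by
  classical
  -- injectivity from linear independence
  have hinj_of_li : ∀ g : Fin n → (Fin (n+1) → Bool), LinearIndependent ℝ (bvToR ∘ g) →
      Function.Injective g := by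
    intro g hg a b hab
    exact hg.injective (show (bvToR ∘ g) a = (bvToR ∘ g) b from congrArg bvToR hab)
  -- membership in Gset
  have hmaps : ∀ g : Fin n → (Fin (n+1) → Bool), LinearIndependent ℝ (bvToR ∘ g) →
      Finset.image g Finset.univ ∈ Gset (n+1) := by
    intro g hg
    have hinj := hinj_of_li g hg
    simp only [Gset, Finset.mem_filter, Finset.mem_univ, true_and]
    refine ⟨by rw [Finset.card_image_of_injective _ hinj]; simp, ?_⟩
    exact (li_comp_iff hinj).mp hg
  -- split off the first row
  have h1 : (Finset.univ.filter (fun M : Fin (n+1) → Fin (n+1) → Bool =>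
        LinearIndependent ℝ (fun i => bvToR (M i)))).card
      = ∑ g ∈ Finset.univ.filter
            (fun g : Fin n → (Fin (n+1) → Bool) => LinearIndependent ℝ (bvToR ∘ g)),
          (Finset.univ.filter (fun x : Fin (n+1) → Bool =>
            bvToR x ∉ Submodule.span ℝ (Set.range (bvToR ∘ g)))).card := by
    rw [Finset.card_eq_sum_card_fiberwise
      (f := fun M : Fin (n+1) → Fin (n+1) → Bool => Fin.tail (α := fun _ => Fin (n+1) → Bool) M)
      (t := Finset.univ.filter
            (fun g : Fin n → (Fin (n+1) → Bool) => LinearIndependent ℝ (bvToR ∘ g)))]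
    · refine Finset.sum_congr rfl (fun g hg => ?_)
      simp only [Finset.mem_filter, Finset.mem_univ, true_and] at hg
      refine Finset.card_bij' (fun M _ => M 0)
        (fun x _ => Fin.cons (α := fun _ => Fin (n+1) → Bool) x g) ?_ ?_ ?_ ?_
      · intro M hM
        simp only [Finset.mem_filter, Finset.mem_univ, true_and] at hM ⊢
        obtain ⟨hli, htail⟩ := hM
        rw [show M = Fin.cons (α := fun _ => Fin (n+1) → Bool) (M 0) (Fin.tail M) from
          (Fin.cons_self_tail (α := fun _ => Fin (n+1) → Bool) M).symm] at hli
        have h3 : LinearIndependent ℝ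
            (Fin.cons (α := fun _ => Fin (n+1) → ℝ) (bvToR (M 0)) (bvToR ∘ Fin.tail M)) := by
          rw [← Fin.comp_cons]
          exact hli
        rw [linearIndependent_fin_cons] at h3
        rw [← htail]
        exact h3.2
      · intro x hx
        simp only [Finset.mem_filter, Finset.mem_univ, true_and] at hx ⊢
        constructor
        · show LinearIndependent ℝ
            (fun i => bvToR (Fin.cons (α := fun _ => Fin (n+1) → Bool) x g i))
          have h4 : (fun i => bvToR (Fin.cons (α := fun _ => Fin (n+1) → Bool) x g i))
              = Fin.cons (α := fun _ => Fin (n+1) → ℝ) (bvToR x) (bvToR ∘ g) := by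
            rw [← Fin.comp_cons]; rfl
          rw [h4, linearIndependent_fin_cons]
          exact ⟨hg, hx⟩
        · exact Fin.tail_cons (α := fun _ => Fin (n+1) → Bool) x g
      · intro M hM
        simp only [Finset.mem_filter] at hM
        show Fin.cons (α := fun _ => Fin (n+1) → Bool) (M 0) g = M
        rw [← hM.2]
        exact Fin.cons_self_tail (α := fun _ => Fin (n+1) → Bool) M
      · intro x hx
        show Fin.cons (α := fun _ => Fin (n+1) → Bool) x g 0 = x
        exact Fin.cons_zero (α := fun _ => Fin (n+1) → Bool) x g
    · intro M hM
      simp only [Finset.mem_coe, Finset.mem_filter, Finset.mem_univ, true_and] at hM ⊢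
      exact hM.comp Fin.succ (Fin.succ_injective n)
  rw [h1]
  -- rewrite each summand using vnum of the image
  have h2 : ∀ g : Fin n → (Fin (n+1) → Bool),
      (Finset.univ.filter (fun x : Fin (n+1) → Bool =>
        bvToR x ∉ Submodule.span ℝ (Set.range (bvToR ∘ g)))).card
      = 2 ^ (n+1) - vnum (Finset.image g Finset.univ) := by
    intro g
    have hr : Set.range (bvToR ∘ g)
        = bvToR '' ((Finset.image g Finset.univ : Finset (Fin (n+1) → Bool))
            : Set (Fin (n+1) → Bool)) := by
      rw [Finset.coe_image, Finset.coe_univ, Set.image_univ, Set.range_comp]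
    rw [hr, Finset.filter_not, Finset.card_sdiff_of_subset (Finset.filter_subset _ _)]
    congr 1
    rw [Finset.card_univ]
    simp
  simp only [h2]
  -- group by the image set
  rw [← Finset.sum_fiberwise_of_maps_to (g := fun g : Fin n → (Fin (n+1) → Bool) =>
        Finset.image g Finset.univ)
      (f := fun g : Fin n → (Fin (n+1) → Bool) =>
        2 ^ (n+1) - vnum (Finset.image g Finset.univ))
      (fun g hg => hmaps g (by simpa using (Finset.mem_filter.mp hg).2))]
  refine Finset.sum_congr rfl (fun G hG => ?_)
  have hG' := hG
  simp only [Gset, Finset.mem_filter, Finset.mem_univ, true_and] at hG'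
  have hGc : G.card = n := by
    have := hG'.1
    simpa using this
  have hfib : (Finset.univ.filter
        (fun g : Fin n → (Fin (n+1) → Bool) => LinearIndependent ℝ (bvToR ∘ g))).filter
          (fun g => Finset.image g Finset.univ = G)
      = Finset.univ.filter
          (fun g : Fin n → (Fin (n+1) → Bool) => Finset.image g Finset.univ = G) := by
    ext g
    simp only [Finset.mem_filter, Finset.mem_univ, true_and, and_iff_right_iff_imp]
    intro himg
    have hinj : Function.Injective g := by
      have h1 : (Finset.univ.image g).card = (Finset.univ : Finset (Fin n)).card := by
        rw [himg, hGc]; simp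
      have h2 := Finset.card_image_iff.mp h1
      intro a b hab
      exact h2 (by simp) (by simp) hab
    rw [li_comp_iff hinj, himg]
    exact hG'.2
  calc (∑ g ∈ (Finset.univ.filter
        (fun g : Fin n → (Fin (n+1) → Bool) => LinearIndependent ℝ (bvToR ∘ g))).filter
          (fun g => Finset.image g Finset.univ = G),
          (2 ^ (n+1) - vnum (Finset.image g Finset.univ)))
      = ∑ g ∈ Finset.univ.filter
          (fun g : Fin n → (Fin (n+1) → Bool) => Finset.image g Finset.univ = G),
          (2 ^ (n+1) - vnum G) := by
        rw [hfib]
        refine Finset.sum_congr rfl (fun g hg => ?_)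
        simp only [Finset.mem_filter, Finset.mem_univ, true_and] at hg
        rw [hg]
    _ = n.factorial * (2 ^ (n+1) - vnum G) := by
        rw [Finset.sum_const, fiber_card hGc, smul_eq_mul]

set_option maxHeartbeats 1000000 in
theorem stmt8 (d : ℕ) (hd : 2 ≤ d) :
    ((Finset.univ.filter (fun M : Matrix (Fin d) (Fin d) Bool => (bmToR M).det ≠ 0)).card : ℝ)
      = ((Gset d).card : ℝ) * d.factorial * ((2 ^ d - Ed d) / d) := by
  obtain ⟨n, rfl⟩ : ∃ n, d = n + 1 := ⟨d - 1, by omega⟩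
  classical
  have hdet : ∀ M : Matrix (Fin (n+1)) (Fin (n+1)) Bool,
      (bmToR M).det ≠ 0 ↔ LinearIndependent ℝ (fun i => bvToR (M i)) := by
    intro M
    have h0 : (fun i => bvToR (M i)) = (bmToR M).row := rfl
    rw [h0, Matrix.linearIndependent_rows_iff_isUnit, Matrix.isUnit_iff_isUnit_det,
      isUnit_iff_ne_zero]
  have key : (Finset.univ.filter
        (fun M : Matrix (Fin (n+1)) (Fin (n+1)) Bool => (bmToR M).det ≠ 0)).card
      = ∑ G ∈ Gset (n+1), n.factorial * (2 ^ (n+1) - vnum G) := by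
    rw [Finset.filter_congr (fun M _ => by rw [hdet M])]
    exact count_li n
  rw [key, Nat.cast_sum]
  have hv : ∀ G ∈ Gset (n+1), vnum G ≤ 2 ^ (n+1) := by
    intro G _
    calc vnum G ≤ (Finset.univ : Finset (Fin (n+1) → Bool)).card := Finset.card_filter_le _ _
      _ = 2 ^ (n+1) := by rw [Finset.card_univ]; simp
  have hsum : ∑ G ∈ Gset (n+1), ((n.factorial * (2 ^ (n+1) - vnum G) : ℕ) : ℝ)
      = (n.factorial : ℝ) * (((Gset (n+1)).card : ℝ) * 2 ^ (n+1)
          - ∑ G ∈ Gset (n+1), (vnum G : ℝ)) := by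
    have hc : ∀ G ∈ Gset (n+1), ((n.factorial * (2 ^ (n+1) - vnum G) : ℕ) : ℝ)
        = (n.factorial : ℝ) * (2 ^ (n+1) - (vnum G : ℝ)) := by
      intro G hG
      rw [Nat.cast_mul, Nat.cast_sub (hv G hG)]
      push_cast
      ring
    rw [Finset.sum_congr rfl hc, ← Finset.mul_sum, Finset.sum_sub_distrib,
      Finset.sum_const, nsmul_eq_mul]
  rw [hsum, Ed]
  rcases eq_or_ne ((Gset (n+1)).card : ℝ) 0 with hc | hc
  · have hGe : Gset (n+1) = ∅ := by
      exact_mod_cast Finset.card_eq_zero.mp (by exact_mod_cast hc)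
    simp [hGe]
  · have hn1 : ((n : ℝ) + 1) ≠ 0 := by positivity
    field_simp
    push_cast [Nat.factorial_succ]
    ring
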